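/- For every σ ∈ Equiv.Perm (Fin m), the trace of the permutation operator P_σ on ⨂[ℂ]^m V equals (N : ℂ) raised to the number of cycles of σ counting fixed points, i.e. LinearMap.trace ℂ (⨂[ℂ]^m V) P_σ = (N : ℂ) ^ (Multiset.card σ.cycleType + (m - σ.cycleType.sum)). -/

import Mathlib

open scoped TensorProduct
set_option maxHeartbeats 1000000

/-- The permutation operator `P_σ` on the `m`-fold tensor power of `V = Fin N → ℂ`,
sending `v₁ ⊗ ⋯ ⊗ v_m` to `v_{σ⁻¹(1)} ⊗ ⋯ ⊗ v_{σ⁻¹(m)}`. -/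
noncomputable def permOp (N m : ℕ) (σ : Equiv.Perm (Fin m)) :
    (⨂[ℂ] _ : Fin m, (Fin N → ℂ)) →ₗ[ℂ] ⨂[ℂ] _ : Fin m, (Fin N → ℂ) :=
  (PiTensorProduct.reindex ℂ (fun _ : Fin m => (Fin N → ℂ)) σ).toLinearMap

section Aux

open PiTensorProduct

variable (N m : ℕ)

/-- The forward multilinear map `v ↦ (f ↦ ∏ i, v i (f i))`. -/
noncomputable def fwdML : MultilinearMap ℂ (fun _ : Fin m => (Fin N → ℂ))
    ((Fin m → Fin N) → ℂ) :=
  MultilinearMap.pi fun f =>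
    (MultilinearMap.mkPiAlgebra ℂ (Fin m) ℂ).compLinearMap fun i => LinearMap.proj (f i)

lemma fwdML_apply (v : Fin m → (Fin N → ℂ)) (f : Fin m → Fin N) :
    fwdML N m v f = ∏ i, v i (f i) := by
  simp [fwdML]

noncomputable def fwd : (⨂[ℂ] _ : Fin m, (Fin N → ℂ)) →ₗ[ℂ] ((Fin m → Fin N) → ℂ) :=
  PiTensorProduct.lift (fwdML N m)

noncomputable def bwd : ((Fin m → Fin N) → ℂ) →ₗ[ℂ] (⨂[ℂ] _ : Fin m, (Fin N → ℂ)) :=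
  (Pi.basisFun ℂ (Fin m → Fin N)).constr ℂ fun f =>
    tprod ℂ fun i => Pi.single (f i) (1 : ℂ)

lemma prod_single_eq (f f' : Fin m → Fin N) :
    (∏ i, (Pi.single (f i) (1 : ℂ) : Fin N → ℂ) (f' i)) = if f = f' then 1 else 0 := by
  by_cases h : f = f'
  · subst h
    simp
  · obtain ⟨i, hi⟩ := Function.ne_iff.1 h
    rw [if_neg h]
    exact Finset.prod_eq_zero (Finset.mem_univ i) (Pi.single_eq_of_ne (Ne.symm hi) 1)

lemma fwd_tprod_single (f : Fin m → Fin N) :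
    fwd N m (tprod ℂ fun i => Pi.single (f i) (1 : ℂ)) = Pi.single f (1 : ℂ) := by
  funext f'
  rw [fwd, PiTensorProduct.lift.tprod, fwdML_apply, prod_single_eq,
    Pi.single_apply]
  simp [eq_comm]

lemma fwd_bwd : (fwd N m).comp (bwd N m) = LinearMap.id := by
  apply (Pi.basisFun ℂ (Fin m → Fin N)).ext
  intro f
  rw [LinearMap.comp_apply, bwd, Module.Basis.constr_basis, fwd_tprod_single,
    LinearMap.id_apply, Pi.basisFun_apply]

lemma bwd_fwd : (bwd N m).comp (fwd N m) = LinearMap.id := by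
  apply PiTensorProduct.ext
  apply MultilinearMap.ext
  intro v
  simp only [LinearMap.compMultilinearMap_apply, LinearMap.comp_apply,
    LinearMap.id_apply]
  have hv : ∀ i : Fin m, v i = ∑ j, v i j • (Pi.single j (1 : ℂ) : Fin N → ℂ) := by
    intro i
    funext k
    simp [Pi.single_apply, eq_comm, Finset.sum_apply]
  rw [show v = fun i => ∑ j, v i j • (Pi.single j (1 : ℂ) : Fin N → ℂ) from funext hv]
  simp only [MultilinearMap.map_sum (PiTensorProduct.tprod ℂ)
    (fun i j => v i j • (Pi.single j (1 : ℂ) : Fin N → ℂ))]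
  rw [fwd, map_sum, map_sum]
  refine Finset.sum_congr rfl fun f _ => ?_
  simp only [MultilinearMap.map_smul_univ, LinearMap.map_smul,
    PiTensorProduct.lift.tprod]
  congr 1
  have : (fwdML N m) (fun i => Pi.single (f i) (1 : ℂ)) = Pi.single f (1 : ℂ) := by
    have := fwd_tprod_single N m f
    rwa [fwd, PiTensorProduct.lift.tprod] at this
  rw [this, bwd]
  rw [show Pi.single f (1 : ℂ) = Pi.basisFun ℂ (Fin m → Fin N) f from
    (Pi.basisFun_apply ℂ (Fin m → Fin N) f).symm]
  rw [Module.Basis.constr_basis]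

/-- The tensor power as a linear equiv with functions. -/
noncomputable def tensorEquiv :
    (⨂[ℂ] _ : Fin m, (Fin N → ℂ)) ≃ₗ[ℂ] ((Fin m → Fin N) → ℂ) :=
  LinearEquiv.ofLinear (fwd N m) (bwd N m) (fwd_bwd N m) (bwd_fwd N m)

/-- The standard basis of the tensor power. -/
noncomputable def tensorBasis :
    Module.Basis (Fin m → Fin N) ℂ (⨂[ℂ] _ : Fin m, (Fin N → ℂ)) :=
  Module.Basis.ofRepr ((tensorEquiv N m).trans
    (Finsupp.linearEquivFunOnFinite ℂ ℂ (Fin m → Fin N)).symm)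

lemma tensorBasis_apply (f : Fin m → Fin N) :
    tensorBasis N m f = PiTensorProduct.tprod ℂ fun i => Pi.single (f i) (1 : ℂ) := by
  rw [Module.Basis.apply_eq_iff]
  show (Finsupp.linearEquivFunOnFinite ℂ ℂ (Fin m → Fin N)).symm
      ((tensorEquiv N m) (PiTensorProduct.tprod ℂ fun i => Pi.single (f i) (1 : ℂ)))
    = Finsupp.single f 1
  have h1 : (tensorEquiv N m) (PiTensorProduct.tprod ℂ fun i => Pi.single (f i) (1 : ℂ))
      = Pi.single f (1 : ℂ) := fwd_tprod_single N m f
  rw [h1]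
  have : (Pi.single f (1 : ℂ) : (Fin m → Fin N) → ℂ) = ⇑(Finsupp.single f (1 : ℂ)) := by
    funext f'
    rw [Finsupp.single_apply, Pi.single_apply]
    simp [eq_comm]
  rw [this, Finsupp.linearEquivFunOnFinite_symm_coe]

end Aux

section Count

variable {m : ℕ} (σ : Equiv.Perm (Fin m))

lemma invar_zpow {N : ℕ} {f : Fin m → Fin N} (hf : f ∘ ⇑σ = f) (i : ℤ) (x : Fin m) :
    f ((σ ^ i) x) = f x := by
  have h1 : ∀ x, f (σ x) = f x := fun x => congrFun hf x
  have hinv : ∀ x, f (σ⁻¹ x) = f x := by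
    intro x
    conv_rhs => rw [← show σ (σ⁻¹ x) = x from σ.apply_symm_apply x]
    rw [h1]
  induction i using Int.induction_on generalizing x with
  | zero => simp
  | succ n ih =>
    have h : (σ ^ ((n : ℤ) + 1)) x = (σ ^ (n : ℤ)) (σ x) := by
      rw [zpow_add_one, Equiv.Perm.mul_apply]
    rw [h, ih (σ x), h1]
  | pred n ih =>
    have h : (σ ^ (-(n : ℤ) - 1)) x = (σ ^ (-(n : ℤ))) (σ⁻¹ x) := by
      rw [zpow_sub_one, Equiv.Perm.mul_apply]
    rw [h, ih (σ⁻¹ x), hinv]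

lemma supp_nonempty (c : ↥σ.cycleFactorsFinset) :
    (c : Equiv.Perm (Fin m)).support.Nonempty :=
  Finset.nonempty_iff_ne_empty.2 fun h =>
    (Equiv.Perm.mem_cycleFactorsFinset_iff.1 c.2).1.ne_one
      (Equiv.Perm.support_eq_empty_iff.1 h)

/-- A choice of a point in the support of each cycle of `σ`. -/
noncomputable def choosePoint (c : ↥σ.cycleFactorsFinset) : Fin m :=
  (supp_nonempty σ c).choose

lemma choosePoint_mem (c : ↥σ.cycleFactorsFinset) :
    choosePoint σ c ∈ (c : Equiv.Perm (Fin m)).support :=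
  (supp_nonempty σ c).choose_spec

lemma choosePoint_mem_support (c : ↥σ.cycleFactorsFinset) :
    choosePoint σ c ∈ σ.support := by
  have h := choosePoint_mem σ c
  have h2 := (Equiv.Perm.mem_cycleFactorsFinset_iff.1 c.2).2 _ h
  rw [Equiv.Perm.mem_support] at h ⊢
  rwa [h2] at h

/-- Invariant functions correspond to assignments of values to cycles and fixed points. -/
noncomputable def invarEquiv (N : ℕ) :
    {f : Fin m → Fin N // f ∘ ⇑σ = f} ≃
      ((↥σ.cycleFactorsFinset ⊕ {x : Fin m // σ x = x}) → Fin N) where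
  toFun f := Sum.elim (fun c => f.1 (choosePoint σ c)) (fun x => f.1 x.1)
  invFun g := ⟨fun x =>
      if h : σ x = x then g (Sum.inr ⟨x, h⟩)
      else g (Sum.inl ⟨σ.cycleOf x,
        Equiv.Perm.cycleOf_mem_cycleFactorsFinset_iff.2 (Equiv.Perm.mem_support.2 h)⟩),
    by
      funext x
      simp only [Function.comp_apply]
      by_cases h : σ x = x
      · simp only [h]
      · have h2 : ¬ σ (σ x) = σ x := fun h3 => h (σ.injective h3)
        rw [dif_neg h2, dif_neg h]
        congr 2
        exact Subtype.ext (σ.cycleOf_self_apply x)⟩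
  left_inv f := by
    apply Subtype.ext
    funext x
    by_cases h : σ x = x
    · simp only [dif_pos h, Sum.elim_inr]
    · simp only [dif_neg h]
      have hp := choosePoint_mem σ ⟨σ.cycleOf x,
          Equiv.Perm.cycleOf_mem_cycleFactorsFinset_iff.2 (Equiv.Perm.mem_support.2 h)⟩
      rw [Equiv.Perm.mem_support_cycleOf_iff] at hp
      obtain ⟨⟨i, hi⟩, -⟩ := hp
      simp only [Sum.elim_inl]
      rw [← hi]
      exact invar_zpow σ f.2 i _
  right_inv g := by
    funext y
    match y with
    | Sum.inr x => simp only [Sum.elim_inr, dif_pos x.2]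
    | Sum.inl c =>
      simp only [Sum.elim_inl]
      have hp := choosePoint_mem σ c
      have h : ¬ σ (choosePoint σ c) = choosePoint σ c :=
        Equiv.Perm.mem_support.1 (choosePoint_mem_support σ c)
      rw [dif_neg h]
      congr 2
      exact Subtype.ext (Equiv.Perm.cycle_is_cycleOf hp c.2).symm

lemma card_invar (N : ℕ) :
    Fintype.card {f : Fin m → Fin N // f ∘ ⇑σ = f}
      = N ^ (Multiset.card σ.cycleType + (m - σ.cycleType.sum)) := by
  rw [Fintype.card_congr (invarEquiv σ N), Fintype.card_fun, Fintype.card_fin,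
    Fintype.card_sum, Fintype.card_coe]
  have hcard : Multiset.card σ.cycleType = σ.cycleFactorsFinset.card := by
    simp [Equiv.Perm.cycleType]
  have hfix : Fintype.card {x : Fin m // σ x = x} = m - σ.support.card := by
    have h1 : Finset.univ.filter (fun x => ¬ σ x = x) = σ.support := by
      ext x
      simp [Equiv.Perm.mem_support]
    have h2 := Finset.card_filter_add_card_filter_not
      (s := (Finset.univ : Finset (Fin m))) (p := fun x => σ x = x)
    rw [h1, Finset.card_univ, Fintype.card_fin] at h2
    rw [Fintype.card_subtype]
    omega
  rw [hcard, Equiv.Perm.sum_cycleType, hfix]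

end Count

/-- The trace of a permutation operator on `V^{⊗ m}` is `N` to the power of the number of
cycles of `σ`, counting fixed points. -/
theorem trace_permOp (N : ℕ) (hN : 0 < N) (m : ℕ) (σ : Equiv.Perm (Fin m)) :
    LinearMap.trace ℂ (⨂[ℂ] _ : Fin m, (Fin N → ℂ)) (permOp N m σ)
      = (N : ℂ) ^ (Multiset.card σ.cycleType + (m - σ.cycleType.sum)) := by
  classical
  rw [LinearMap.trace_eq_matrix_trace ℂ (tensorBasis N m), Matrix.trace]
  have hdiag : ∀ f : Fin m → Fin N,
      (LinearMap.toMatrix (tensorBasis N m) (tensorBasis N m) (permOp N m σ)).diag f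
        = if f ∘ ⇑σ = f then (1 : ℂ) else 0 := by
    intro f
    rw [Matrix.diag_apply, LinearMap.toMatrix_apply, tensorBasis_apply, permOp,
      LinearEquiv.coe_coe, PiTensorProduct.reindex_tprod]
    have : ((PiTensorProduct.tprod ℂ) fun i => Pi.single (f (σ.symm i)) (1 : ℂ))
        = tensorBasis N m (f ∘ ⇑σ.symm) := (tensorBasis_apply N m (f ∘ ⇑σ.symm)).symm
    rw [this, Module.Basis.repr_self, Finsupp.single_apply]
    congr 1
    simp only [eq_iff_iff]
    constructor
    · intro h
      funext x
      have := congrFun h (σ x)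
      simpa using this.symm
    · intro h
      funext x
      have := congrFun h (σ.symm x)
      simp only [Function.comp_apply, Equiv.apply_symm_apply] at this
      rw [Function.comp_apply, this]
  rw [Finset.sum_congr rfl fun f _ => hdiag f]
  rw [Finset.sum_boole]
  rw [← Fintype.card_subtype, card_invar σ N]
  push_cast
  ring
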